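/- Let K'_{n,n} be the graph obtained from the complete bipartite graph K_{n,n} by subdividing exactly one edge (so V = {u_1,...,u_n, v_1,...,v_n, w}, with all edges u_i v_j except u_n v_n, plus edges u_n w and w v_n). Then the edge-coloring α defined by α(u_i v_j) = i + j − 1, α(u_n w) = 2n − 1, α(w v_n) = 2n is a proper (2n)-edge-coloring of K'_{n,n} with deficiency def(K'_{n,n}, α) = 1. -/

import Mathlib

open scoped Classical

/-- A proper edge-coloring: distinct edges sharing a vertex receive distinct colors. -/
def IsProperEdgeColoring {V : Type*} (G : SimpleGraph V) (c : Sym2 V → ℕ) : Prop :=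
  ∀ e ∈ G.edgeSet, ∀ e' ∈ G.edgeSet, e ≠ e' → (∃ v, v ∈ e ∧ v ∈ e') → c e ≠ c e'

/-- A proper `t`-edge-coloring: proper, colors lie in `{1,…,t}`, and all colors are used. -/
def IsProperTEdgeColoring {V : Type*} (G : SimpleGraph V) (t : ℕ) (c : Sym2 V → ℕ) : Prop :=
  IsProperEdgeColoring G c ∧ (∀ e ∈ G.edgeSet, c e ∈ Finset.Icc 1 t) ∧
    ∀ k ∈ Finset.Icc 1 t, ∃ e ∈ G.edgeSet, c e = k

/-- The vSpectrum of a vertex: the set of colors appearing on edges incident to `v`. -/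
noncomputable def vSpectrum {V : Type*} [Fintype V] (G : SimpleGraph V) (c : Sym2 V → ℕ)
    (v : V) : Finset ℕ :=
  (Finset.univ.filter (fun u => G.Adj v u)).image (fun u => c s(v, u))

/-- The deficiency of a finite set of naturals: `max S − min S − |S| + 1`. -/
def setDef (S : Finset ℕ) : ℕ := (S.max.getD 0 - S.min.getD 0) - (S.card - 1)

/-- The deficiency of a proper edge-coloring: the sum of vertex deficiencies. -/
noncomputable def colDef {V : Type*} [Fintype V] (G : SimpleGraph V) (c : Sym2 V → ℕ) : ℕ :=
  ∑ v, setDef (vSpectrum G c v)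

/-- The deficiency of a graph: the minimum deficiency over all proper edge-colorings. -/
noncomputable def graphDef {V : Type*} [Fintype V] (G : SimpleGraph V) : ℕ :=
  sInf {d | ∃ c, IsProperEdgeColoring G c ∧ colDef G c = d}

/-- `w_def G`: the least `t` such that some proper `t`-edge-coloring attains `def(G)`. -/
noncomputable def wdef {V : Type*} [Fintype V] (G : SimpleGraph V) : ℕ :=
  sInf {t | ∃ c, IsProperTEdgeColoring G t c ∧ colDef G c = graphDef G}

/-- `W_def G`: the greatest `t` such that some proper `t`-edge-coloring attains `def(G)`. -/
noncomputable def Wdef {V : Type*} [Fintype V] (G : SimpleGraph V) : ℕ :=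
  sSup {t | ∃ c, IsProperTEdgeColoring G t c ∧ colDef G c = graphDef G}

/-- A graph is interval colorable if some proper edge-coloring has deficiency `0`. -/
def IntervalColorable {V : Type*} [Fintype V] (G : SimpleGraph V) : Prop :=
  ∃ c, IsProperEdgeColoring G c ∧ colDef G c = 0

/-- `w G`: the least `t` such that `G` has an interval `t`-coloring. -/
noncomputable def wint {V : Type*} [Fintype V] (G : SimpleGraph V) : ℕ :=
  sInf {t | ∃ c, IsProperTEdgeColoring G t c ∧ colDef G c = 0}

/-- `W G`: the greatest `t` such that `G` has an interval `t`-coloring. -/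
noncomputable def Wint {V : Type*} [Fintype V] (G : SimpleGraph V) : ℕ :=
  sSup {t | ∃ c, IsProperTEdgeColoring G t c ∧ colDef G c = 0}

/-- `K'_{n,n}`: the complete bipartite graph `K_{n,n}` with the edge `u_n v_n`
subdivided by a new vertex `w`.  Here `Sum.inl i` is `u_{i+1}`,
`Sum.inr (Sum.inl j)` is `v_{j+1}` and `Sum.inr (Sum.inr ())` is `w`. -/
def Kprime (n : ℕ) : SimpleGraph (Fin n ⊕ Fin n ⊕ Unit) :=
  SimpleGraph.fromRel (fun a b =>
    (∃ i j : Fin n, a = Sum.inl i ∧ b = Sum.inr (Sum.inl j) ∧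
      ¬(i.val = n - 1 ∧ j.val = n - 1)) ∨
    (∃ i : Fin n, i.val = n - 1 ∧ a = Sum.inl i ∧ b = Sum.inr (Sum.inr ())) ∨
    (∃ j : Fin n, j.val = n - 1 ∧ a = Sum.inr (Sum.inr ()) ∧ b = Sum.inr (Sum.inl j)))

/-- The coloring `α(u_i v_j) = i + j − 1`, `α(u_n w) = 2n − 1`, `α(w v_n) = 2n`
(with the `1`-based indexing of the paper). -/
def KprimeColoring (n : ℕ) : Sym2 (Fin n ⊕ Fin n ⊕ Unit) → ℕ :=
  Sym2.lift ⟨fun a b =>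
    match a, b with
    | Sum.inl i, Sum.inr (Sum.inl j) => i.val + j.val + 1
    | Sum.inr (Sum.inl j), Sum.inl i => i.val + j.val + 1
    | Sum.inl _, Sum.inr (Sum.inr _) => 2 * n - 1
    | Sum.inr (Sum.inr _), Sum.inl _ => 2 * n - 1
    | Sum.inr (Sum.inl _), Sum.inr (Sum.inr _) => 2 * n
    | Sum.inr (Sum.inr _), Sum.inr (Sum.inl _) => 2 * n
    | _, _ => 0,
    by intro a b; rcases a with i | j | u <;> rcases b with ip | jp | up <;> rfl⟩


section Aux

variable {n : ℕ}

lemma adj_ul (i j : Fin n) :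
    (Kprime n).Adj (Sum.inl i) (Sum.inr (Sum.inl j)) ↔ ¬(i.val = n-1 ∧ j.val = n-1) := by
  simp [Kprime, SimpleGraph.fromRel_adj]

lemma adj_uw' (i : Fin n) (u : Unit) :
    (Kprime n).Adj (Sum.inl i) (Sum.inr (Sum.inr u)) ↔ i.val = n-1 := by
  simp [Kprime, SimpleGraph.fromRel_adj]

lemma adj_uw (i : Fin n) :
    (Kprime n).Adj (Sum.inl i) (Sum.inr (Sum.inr ())) ↔ i.val = n-1 :=
  adj_uw' i ()

lemma adj_wv' (j : Fin n) (u : Unit) :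
    (Kprime n).Adj (Sum.inr (Sum.inr u)) (Sum.inr (Sum.inl j)) ↔ j.val = n-1 := by
  simp [Kprime, SimpleGraph.fromRel_adj]

lemma adj_wv (j : Fin n) :
    (Kprime n).Adj (Sum.inr (Sum.inr ())) (Sum.inr (Sum.inl j)) ↔ j.val = n-1 :=
  adj_wv' j ()

lemma not_adj_uu (i i' : Fin n) : ¬ (Kprime n).Adj (Sum.inl i) (Sum.inl i') := by
  simp [Kprime, SimpleGraph.fromRel_adj]

lemma not_adj_vv (j j' : Fin n) :
    ¬ (Kprime n).Adj (Sum.inr (Sum.inl j)) (Sum.inr (Sum.inl j')) := by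
  simp [Kprime, SimpleGraph.fromRel_adj]


lemma adj_lu (i j : Fin n) :
    (Kprime n).Adj (Sum.inr (Sum.inl j)) (Sum.inl i) ↔ ¬(i.val = n-1 ∧ j.val = n-1) := by
  rw [SimpleGraph.adj_comm]; exact adj_ul i j

lemma adj_wu' (i : Fin n) (u : Unit) :
    (Kprime n).Adj (Sum.inr (Sum.inr u)) (Sum.inl i) ↔ i.val = n-1 := by
  rw [SimpleGraph.adj_comm]; exact adj_uw' i u

lemma adj_wu (i : Fin n) :
    (Kprime n).Adj (Sum.inr (Sum.inr ())) (Sum.inl i) ↔ i.val = n-1 :=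
  adj_wu' i ()

lemma adj_vw' (j : Fin n) (u : Unit) :
    (Kprime n).Adj (Sum.inr (Sum.inl j)) (Sum.inr (Sum.inr u)) ↔ j.val = n-1 := by
  rw [SimpleGraph.adj_comm]; exact adj_wv' j u

lemma adj_vw (j : Fin n) :
    (Kprime n).Adj (Sum.inr (Sum.inl j)) (Sum.inr (Sum.inr ())) ↔ j.val = n-1 :=
  adj_vw' j ()

@[simp] lemma col_ul (i j : Fin n) :
    KprimeColoring n s(Sum.inl i, Sum.inr (Sum.inl j)) = i.val + j.val + 1 := rfl

@[simp] lemma col_lu (i j : Fin n) :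
    KprimeColoring n s(Sum.inr (Sum.inl j), Sum.inl i) = i.val + j.val + 1 := rfl

@[simp] lemma col_uw (i : Fin n) (u : Unit) :
    KprimeColoring n s(Sum.inl i, Sum.inr (Sum.inr u)) = 2*n - 1 := rfl

@[simp] lemma col_wu (i : Fin n) (u : Unit) :
    KprimeColoring n s(Sum.inr (Sum.inr u), Sum.inl i) = 2*n - 1 := rfl

@[simp] lemma col_vw (j : Fin n) (u : Unit) :
    KprimeColoring n s(Sum.inr (Sum.inl j), Sum.inr (Sum.inr u)) = 2*n := rfl

@[simp] lemma col_wv (j : Fin n) (u : Unit) :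
    KprimeColoring n s(Sum.inr (Sum.inr u), Sum.inr (Sum.inl j)) = 2*n := rfl

lemma mem_vSpectrum {V : Type*} [Fintype V] (G : SimpleGraph V) (c : Sym2 V → ℕ) (v : V)
    (k : ℕ) : k ∈ vSpectrum G c v ↔ ∃ u, G.Adj v u ∧ c s(v, u) = k := by
  simp [vSpectrum]

lemma maxD_eq {S : Finset ℕ} {b : ℕ} (hb : b ∈ S) (h : ∀ x ∈ S, x ≤ b) :
    S.max.getD 0 = b := by
  have hne : S.Nonempty := ⟨b, hb⟩
  have h1 : S.max' hne = b :=
    le_antisymm (Finset.max'_le _ _ _ h) (Finset.le_max' _ _ hb)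
  rw [← Finset.coe_max' hne, h1]; rfl

lemma minD_eq {S : Finset ℕ} {a : ℕ} (ha : a ∈ S) (h : ∀ x ∈ S, a ≤ x) :
    S.min.getD 0 = a := by
  have hne : S.Nonempty := ⟨a, ha⟩
  have h1 : S.min' hne = a :=
    le_antisymm (Finset.min'_le _ _ ha) (Finset.le_min' _ _ _ h)
  rw [← Finset.coe_min' hne, h1]; rfl

lemma setDef_Icc (a b : ℕ) (h : a ≤ b) : setDef (Finset.Icc a b) = 0 := by
  unfold setDef
  rw [maxD_eq (Finset.mem_Icc.2 ⟨h, le_rfl⟩) (fun x hx => (Finset.mem_Icc.1 hx).2),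
    minD_eq (Finset.mem_Icc.2 ⟨le_rfl, h⟩) (fun x hx => (Finset.mem_Icc.1 hx).1),
    Nat.card_Icc]
  omega

lemma setDef_special (hn : 2 ≤ n) :
    setDef (Finset.Icc n (2*n-2) ∪ {2*n}) = 1 := by
  have h1 : n ≤ 2*n-2 := by omega
  have hmax : (Finset.Icc n (2*n-2) ∪ {2*n}).max.getD 0 = 2*n := by
    refine maxD_eq ?_ ?_
    · simp
    · intro x hx
      rcases Finset.mem_union.1 hx with hx | hx
      · have := (Finset.mem_Icc.1 hx).2; omega
      · simp at hx; omega
  have hmin : (Finset.Icc n (2*n-2) ∪ {2*n}).min.getD 0 = n := by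
    refine minD_eq ?_ ?_
    · exact Finset.mem_union_left _ (Finset.mem_Icc.2 ⟨le_rfl, h1⟩)
    · intro x hx
      rcases Finset.mem_union.1 hx with hx | hx
      · exact (Finset.mem_Icc.1 hx).1
      · simp at hx; omega
  have hcard : (Finset.Icc n (2*n-2) ∪ {2*n}).card = n := by
    rw [Finset.card_union_of_disjoint (by
      simp only [Finset.disjoint_singleton_right, Finset.mem_Icc]; omega)]
    rw [Nat.card_Icc]; simp; omega
  unfold setDef
  rw [hmax, hmin, hcard]
  omega

lemma setDef_w (hn : 2 ≤ n) : setDef ({2*n-1, 2*n} : Finset ℕ) = 0 := by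
  have hmax : ({2*n-1, 2*n} : Finset ℕ).max.getD 0 = 2*n := by
    refine maxD_eq (by simp) ?_
    intro x hx; simp at hx; omega
  have hmin : ({2*n-1, 2*n} : Finset ℕ).min.getD 0 = 2*n-1 := by
    refine minD_eq (by simp) ?_
    intro x hx; simp at hx; omega
  have hcard : ({2*n-1, 2*n} : Finset ℕ).card = 2 := by
    rw [Finset.card_insert_of_notMem (by simp; omega)]; simp
  unfold setDef
  rw [hmax, hmin, hcard]
  omega

lemma spec_u_lt (i : Fin n) (h : i.val < n - 1) :
    vSpectrum (Kprime n) (KprimeColoring n) (Sum.inl i) =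
      Finset.Icc (i.val+1) (i.val+n) := by
  have hn : 2 ≤ n := by omega
  ext k
  rw [mem_vSpectrum, Finset.mem_Icc]
  constructor
  · rintro ⟨u, hadj, rfl⟩
    rcases u with i' | j | u
    · exact absurd hadj (not_adj_uu _ _)
    · have := j.isLt; simp
    · rw [adj_uw] at hadj; omega
  · rintro ⟨h1, h2⟩
    refine ⟨Sum.inr (Sum.inl ⟨k - i.val - 1, by omega⟩), ?_, ?_⟩
    · rw [adj_ul]; rintro ⟨h3, -⟩; omega
    · simp; omega

lemma spec_u_eq (hn : 2 ≤ n) (i : Fin n) (h : i.val = n - 1) :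
    vSpectrum (Kprime n) (KprimeColoring n) (Sum.inl i) = Finset.Icc n (2*n-1) := by
  ext k
  rw [mem_vSpectrum, Finset.mem_Icc]
  constructor
  · rintro ⟨u, hadj, rfl⟩
    rcases u with i' | j | u
    · exact absurd hadj (not_adj_uu _ _)
    · rw [adj_ul] at hadj
      have := j.isLt
      have : j.val ≠ n - 1 := fun hj => hadj ⟨h, hj⟩
      simp; omega
    · simp; omega
  · rintro ⟨h1, h2⟩
    rcases eq_or_lt_of_le h2 with h3 | h3
    · exact ⟨Sum.inr (Sum.inr ()), (adj_uw i).2 h, by simp; omega⟩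
    · refine ⟨Sum.inr (Sum.inl ⟨k - n, by omega⟩), ?_, ?_⟩
      · rw [adj_ul]; rintro ⟨-, h4⟩; simp at h4; omega
      · simp; omega

lemma spec_v_lt (j : Fin n) (h : j.val < n - 1) :
    vSpectrum (Kprime n) (KprimeColoring n) (Sum.inr (Sum.inl j)) =
      Finset.Icc (j.val+1) (j.val+n) := by
  have hn : 2 ≤ n := by omega
  ext k
  rw [mem_vSpectrum, Finset.mem_Icc]
  constructor
  · rintro ⟨u, hadj, rfl⟩
    rcases u with i | j' | u
    · have := i.isLt; simp; omega
    · exact absurd hadj (not_adj_vv _ _)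
    · rcases u with ⟨⟩
      rw [SimpleGraph.adj_comm, adj_wv] at hadj
      omega
  · rintro ⟨h1, h2⟩
    refine ⟨Sum.inl ⟨k - j.val - 1, by omega⟩, ?_, ?_⟩
    · exact ((adj_ul _ _).2 (by rintro ⟨-, h3⟩; omega)).symm
    · simp; omega

lemma spec_v_eq (hn : 2 ≤ n) (j : Fin n) (h : j.val = n - 1) :
    vSpectrum (Kprime n) (KprimeColoring n) (Sum.inr (Sum.inl j)) =
      Finset.Icc n (2*n-2) ∪ {2*n} := by
  ext k
  rw [mem_vSpectrum, Finset.mem_union, Finset.mem_Icc, Finset.mem_singleton]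
  constructor
  · rintro ⟨u, hadj, rfl⟩
    rcases u with i | j' | u
    · have hadj' := hadj.symm
      rw [adj_ul] at hadj'
      have := i.isLt
      have : i.val ≠ n - 1 := fun hi => hadj' ⟨hi, h⟩
      simp; omega
    · exact absurd hadj (not_adj_vv _ _)
    · simp
  · rintro (⟨h1, h2⟩ | h1)
    · refine ⟨Sum.inl ⟨k - n, by omega⟩, ?_, ?_⟩
      · exact ((adj_ul _ _).2 (by rintro ⟨h3, -⟩; simp at h3; omega)).symm
      · simp; omega
    · exact ⟨Sum.inr (Sum.inr ()), ((adj_wv j).2 h).symm, by simp; omega⟩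

lemma spec_w (hn : 2 ≤ n) (w : Unit) :
    vSpectrum (Kprime n) (KprimeColoring n) (Sum.inr (Sum.inr w)) =
      {2*n-1, 2*n} := by
  ext k
  rw [mem_vSpectrum, Finset.mem_insert, Finset.mem_singleton]
  constructor
  · rintro ⟨u, hadj, rfl⟩
    rcases u with i | j | u
    · simp
    · simp
    · exact absurd hadj (SimpleGraph.irrefl _)
  · rintro (h1 | h1)
    · exact ⟨Sum.inl ⟨n-1, by omega⟩, ((adj_uw' _ _).2 rfl).symm, by simp; omega⟩
    · exact ⟨Sum.inr (Sum.inl ⟨n-1, by omega⟩), (adj_wv' _ _).2 rfl, by simp; omega⟩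

lemma proper_kprime (hn : 2 ≤ n) : IsProperEdgeColoring (Kprime n) (KprimeColoring n) := by
  intro e he e' he' hne hv
  obtain ⟨v, hv1, hv2⟩ := hv
  obtain ⟨a, rfl⟩ := Sym2.mem_iff_exists.1 hv1
  obtain ⟨b, rfl⟩ := Sym2.mem_iff_exists.1 hv2
  rw [SimpleGraph.mem_edgeSet] at he he'
  have hab : a ≠ b := fun h => hne (by rw [h])
  rcases v with i | j | ⟨⟩
  · -- v = u_i
    rcases a with i1 | j1 | ⟨⟩
    · exact absurd he (not_adj_uu _ _)
    · rcases b with i2 | j2 | ⟨⟩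
      · exact absurd he' (not_adj_uu _ _)
      · have h0 : j1 ≠ j2 := by rintro rfl; exact hab rfl
        have h1 : (j1 : ℕ) ≠ (j2 : ℕ) := fun h => h0 (Fin.ext h)
        simp only [col_ul]; omega
      · rw [adj_uw'] at he'
        rw [adj_ul] at he
        have h1 := j1.isLt
        simp only [col_ul, col_uw]; omega
    · rcases b with i2 | j2 | ⟨⟩
      · exact absurd he' (not_adj_uu _ _)
      · rw [adj_uw'] at he
        rw [adj_ul] at he'
        have h1 := j2.isLt
        simp only [col_ul, col_uw]; omega
      · exact absurd rfl hab
  · -- v = v_j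
    rcases a with i1 | j1 | ⟨⟩
    · rcases b with i2 | j2 | ⟨⟩
      · have h0 : i1 ≠ i2 := by rintro rfl; exact hab rfl
        have h1 : (i1 : ℕ) ≠ (i2 : ℕ) := fun h => h0 (Fin.ext h)
        simp only [col_lu]; omega
      · exact absurd he' (not_adj_vv _ _)
      · rw [adj_vw'] at he'
        have h1 := i1.isLt
        simp only [col_lu, col_vw]; omega
    · exact absurd he (not_adj_vv _ _)
    · rcases b with i2 | j2 | ⟨⟩
      · rw [adj_vw'] at he
        have h1 := i2.isLt
        simp only [col_lu, col_vw]; omega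
      · exact absurd he' (not_adj_vv _ _)
      · exact absurd rfl hab
  · -- v = w
    rcases a with i1 | j1 | ⟨⟩
    · rcases b with i2 | j2 | ⟨⟩
      · rw [adj_wu'] at he he'
        exact absurd (by rw [show i1 = i2 from Fin.ext (by omega)]) hab
      · simp only [col_wu, col_wv]; omega
      · exact absurd he' ((Kprime n).loopless.irrefl _)
    · rcases b with i2 | j2 | ⟨⟩
      · simp only [col_wu, col_wv]; omega
      · rw [adj_wv'] at he he'
        exact absurd (by rw [show j1 = j2 from Fin.ext (by omega)]) hab
      · exact absurd he' ((Kprime n).loopless.irrefl _)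
    · exact absurd he ((Kprime n).loopless.irrefl _)

end Aux

theorem stmt_3 (n : ℕ) (hn : 2 ≤ n) :
    IsProperTEdgeColoring (Kprime n) (2 * n) (KprimeColoring n) ∧
    colDef (Kprime n) (KprimeColoring n) = 1 := by
  refine ⟨⟨proper_kprime hn, ?_, ?_⟩, ?_⟩
  · -- colors lie in Icc 1 (2n)
    intro e he
    induction e using Sym2.ind with
    | _ a b =>
      rw [SimpleGraph.mem_edgeSet] at he
      rw [Finset.mem_Icc]
      rcases a with i | j | ⟨⟩ <;> rcases b with i' | j' | ⟨⟩
      · exact absurd he (not_adj_uu _ _)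
      · have h1 := i.isLt; have h2 := j'.isLt
        simp only [col_ul]; omega
      · simp only [col_uw]; omega
      · have h1 := i'.isLt; have h2 := j.isLt
        simp only [col_lu]; omega
      · exact absurd he (not_adj_vv _ _)
      · simp only [col_vw]; omega
      · simp only [col_wu]; omega
      · simp only [col_wv]; omega
      · exact absurd he ((Kprime n).loopless.irrefl _)
  · -- all colors are used
    intro k hk
    rw [Finset.mem_Icc] at hk
    by_cases h1 : k ≤ n
    · refine ⟨s(Sum.inl ⟨0, by omega⟩, Sum.inr (Sum.inl ⟨k-1, by omega⟩)), ?_, ?_⟩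
      · rw [SimpleGraph.mem_edgeSet, adj_ul]
        show ¬((0:ℕ) = n - 1 ∧ k - 1 = n - 1)
        omega
      · show 0 + (k - 1) + 1 = k
        omega
    · by_cases h2 : k ≤ 2*n - 2
      · refine ⟨s(Sum.inl ⟨k - n, by omega⟩, Sum.inr (Sum.inl ⟨n-1, by omega⟩)), ?_, ?_⟩
        · rw [SimpleGraph.mem_edgeSet, adj_ul]
          show ¬(k - n = n - 1 ∧ n - 1 = n - 1)
          omega
        · show (k - n) + (n - 1) + 1 = k
          omega
      · by_cases h3 : k = 2*n - 1
        · refine ⟨s(Sum.inl ⟨n-1, by omega⟩, Sum.inr (Sum.inr ())), ?_, ?_⟩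
          · rw [SimpleGraph.mem_edgeSet, adj_uw]
          · show 2*n - 1 = k
            omega
        · refine ⟨s(Sum.inr (Sum.inr ()), Sum.inr (Sum.inl ⟨n-1, by omega⟩)), ?_, ?_⟩
          · rw [SimpleGraph.mem_edgeSet, adj_wv]
          · show 2*n = k
            omega
  · -- deficiency is 1
    unfold colDef
    rw [Fintype.sum_sum_type, Fintype.sum_sum_type]
    have hA : ∑ i : Fin n, setDef (vSpectrum (Kprime n) (KprimeColoring n) (Sum.inl i)) = 0 := by
      apply Finset.sum_eq_zero
      intro i _
      by_cases h : (i : ℕ) = n - 1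
      · rw [spec_u_eq hn i h]; exact setDef_Icc _ _ (by omega)
      · have := i.isLt
        rw [spec_u_lt i (by omega)]; exact setDef_Icc _ _ (by omega)
    have hB : ∑ j : Fin n,
        setDef (vSpectrum (Kprime n) (KprimeColoring n) (Sum.inr (Sum.inl j))) = 1 := by
      have key : ∀ j : Fin n,
          setDef (vSpectrum (Kprime n) (KprimeColoring n) (Sum.inr (Sum.inl j))) =
            if j = (⟨n-1, by omega⟩ : Fin n) then 1 else 0 := by
        intro j
        by_cases h : (j : ℕ) = n - 1
        · rw [spec_v_eq hn j h, if_pos (Fin.ext h)]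
          exact setDef_special hn
        · have := j.isLt
          rw [spec_v_lt j (by omega), if_neg (fun hj => h (by rw [hj]))]
          exact setDef_Icc _ _ (by omega)
      rw [Finset.sum_congr rfl (fun j _ => key j)]
      simp
    have hC : ∑ u : Unit,
        setDef (vSpectrum (Kprime n) (KprimeColoring n) (Sum.inr (Sum.inr u))) = 0 := by
      apply Finset.sum_eq_zero
      intro u _
      rw [spec_w hn u]
      exact setDef_w hn
    rw [hA, hB, hC]
    omega
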